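/- Conservation of discrete total energy for the modified semi-discrete discontinuous Galerkin scheme: if (C_0,…,C_{N_H−1}, E, Φ) solves the semi-discrete DG scheme with the DG Poisson solver, then the discrete total energy ℰ_h(t) := (1/2) ∫_0^L [ v_th³ (√2 · C_2(t,x) + C_0(t,x)) + E(t,x)² ] dx + (β/2) Σ_{j=1}^{N_x} ([Φ(t,·)]_{j−1/2})² is constant in t. -/

import Mathlib

open MeasureTheory Finset

noncomputable section

/-- Left (minus) one-sided limit of the piecewise polynomial with cell
polynomials `u 0, …, u (Nx−1)` at the interface `x_{i+1/2} = X i`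
(interfaces `i = 0` and `i = Nx` are identified periodically). -/
def dgMinus (Nx : ℕ) (X : ℕ → ℝ) (u : ℕ → Polynomial ℝ) (i : ℕ) : ℝ :=
  if i = 0 then (u (Nx - 1)).eval (X Nx) else (u (i - 1)).eval (X i)

/-- Right (plus) one-sided limit at the interface `X i` (periodic). -/
def dgPlus (Nx : ℕ) (X : ℕ → ℝ) (u : ℕ → Polynomial ℝ) (i : ℕ) : ℝ :=
  if i = Nx then (u 0).eval (X 0) else (u i).eval (X i)

/-- Jump `[u] = u⁺ − u⁻` at the interface `X i`. -/
def dgJump (Nx : ℕ) (X : ℕ → ℝ) (u : ℕ → Polynomial ℝ) (i : ℕ) : ℝ :=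
  dgPlus Nx X u i - dgMinus Nx X u i

/-- Average `{u} = (u⁺ + u⁻)/2` at the interface `X i`. -/
def dgAvg (Nx : ℕ) (X : ℕ → ℝ) (u : ℕ → Polynomial ℝ) (i : ℕ) : ℝ :=
  (dgPlus Nx X u i + dgMinus Nx X u i) / 2

/-- Integral over the cell `I_j = (X j, X (j+1))`. -/
def cellInt (X : ℕ → ℝ) (j : ℕ) (f : ℝ → ℝ) : ℝ :=
  ∫ x in (X j)..(X (j + 1)), f x

/-- `g_n = v_th (√(n+1) C_{n+1} + √n C_{n−1})` on each cell (the convention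
`C_{−1} = 0` is handled by `√0 = 0` and truncated subtraction). -/
def dgG (vth : ℝ) (Cf : ℕ → ℕ → Polynomial ℝ) (n j : ℕ) : Polynomial ℝ :=
  vth • (Real.sqrt (n + 1) • Cf (n + 1) j + Real.sqrt n • Cf (n - 1) j)

/-- Global Lax–Friedrichs flux
`ĝ_n = (1/2)(g_n⁻ + g_n⁺ − α (C_n⁺ − C_n⁻))` with `α = v_th √N_H`. -/
def dgGhat (vth : ℝ) (NH Nx : ℕ) (X : ℕ → ℝ) (Cf : ℕ → ℕ → Polynomial ℝ)
    (n i : ℕ) : ℝ :=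
  (1 / 2) * (dgMinus Nx X (dgG vth Cf n) i + dgPlus Nx X (dgG vth Cf n) i
    - vth * Real.sqrt NH *
        (dgPlus Nx X (Cf n) i - dgMinus Nx X (Cf n) i))

/-- `Ĉ_1 = ĝ_0 / v_th`. -/
def dgC1hat (vth : ℝ) (NH Nx : ℕ) (X : ℕ → ℝ) (Cf : ℕ → ℕ → Polynomial ℝ)
    (i : ℕ) : ℝ :=
  dgGhat vth NH Nx X Cf 0 i / vth

/-- The convective DG form
`a_n^j(g_n, φ) = −∫_{I_j} g_n φ' + ĝ_{n,j+1/2} φ(x_{j+1/2}⁻) − ĝ_{n,j−1/2} φ(x_{j−1/2}⁺)`. -/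
def dgA (vth : ℝ) (NH Nx : ℕ) (X : ℕ → ℝ) (Cf : ℕ → ℕ → Polynomial ℝ)
    (n j : ℕ) (φ : Polynomial ℝ) : ℝ :=
  -(cellInt X j fun x => (dgG vth Cf n j).eval x * φ.derivative.eval x)
    + dgGhat vth NH Nx X Cf n (j + 1) * φ.eval (X (j + 1))
    - dgGhat vth NH Nx X Cf n j * φ.eval (X j)

/-- The residual `⟨r_1^j, φ⟩`. -/
def dgR1 (vth β : ℝ) (Nx : ℕ) (X : ℕ → ℝ) (Ef Φf : ℕ → Polynomial ℝ)
    (j : ℕ) (φ : Polynomial ℝ) : ℝ :=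
  -(β / (2 * vth ^ 2)) *
    ((dgJump Nx X Φf j * dgJump Nx X Ef j) * φ.eval (X j)
      + (dgJump Nx X Φf (j + 1) * dgJump Nx X Ef (j + 1)) * φ.eval (X (j + 1)))

/-- The residual `⟨r_2^j, φ⟩`. -/
def dgR2 (vth : ℝ) (NH Nx : ℕ) (X : ℕ → ℝ) (Cf : ℕ → ℕ → Polynomial ℝ)
    (Φf : ℕ → Polynomial ℝ) (j : ℕ) (φ : Polynomial ℝ) : ℝ :=
  (1 / (Real.sqrt 2 * vth)) *
    ((dgAvg Nx X (Cf 1) j - dgC1hat vth NH Nx X Cf j) * dgJump Nx X Φf j *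
        φ.eval (X j)
      + (dgAvg Nx X (Cf 1) (j + 1) - dgC1hat vth NH Nx X Cf (j + 1)) *
          dgJump Nx X Φf (j + 1) * φ.eval (X (j + 1)))

/-- The residual `⟨r_n^j, φ⟩` (zero for `n ∉ {1, 2}`). -/
def dgR (vth β : ℝ) (NH Nx : ℕ) (X : ℕ → ℝ) (Cf : ℕ → ℕ → Polynomial ℝ)
    (Ef Φf : ℕ → Polynomial ℝ) (n j : ℕ) (φ : Polynomial ℝ) : ℝ :=
  if n = 1 then dgR1 vth β Nx X Ef Φf j φ
  else if n = 2 then dgR2 vth NH Nx X Cf Φf j φ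
  else 0

/-- The source form `b_n^j(C, E, Φ, φ) = −(√n/v_th) ∫_{I_j} E C_{n−1} φ − ⟨r_n^j, φ⟩`
(for `n = 0` this is `0` since `√0 = 0` and `r_0 = 0`). -/
def dgB (vth β : ℝ) (NH Nx : ℕ) (X : ℕ → ℝ) (Cf : ℕ → ℕ → Polynomial ℝ)
    (Ef Φf : ℕ → Polynomial ℝ) (n j : ℕ) (φ : Polynomial ℝ) : ℝ :=
  -(Real.sqrt n / vth) *
      (cellInt X j fun x => (Ef j).eval x * (Cf (n - 1) j).eval x * φ.eval x)
    - dgR vth β NH Nx X Cf Ef Φf n j φ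

/-- The local DG scheme for the Poisson equation with source `C_0`, with
fluxes `Φ̂ = {Φ}` and `Ê = {E} − β [Φ]`. -/
def dgPoisson (vth ρ0 β : ℝ) (k Nx : ℕ) (X : ℕ → ℝ)
    (C0f Ef Φf : ℕ → Polynomial ℝ) : Prop :=
  ∀ j < Nx, ∀ ψ : Polynomial ℝ, ψ.natDegree ≤ k →
    ((cellInt X j fun x => (Φf j).eval x * ψ.derivative.eval x)
        - dgAvg Nx X Φf (j + 1) * ψ.eval (X (j + 1))
        + dgAvg Nx X Φf j * ψ.eval (X j)
      = cellInt X j fun x => (Ef j).eval x * ψ.eval x)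
    ∧ (-(cellInt X j fun x => (Ef j).eval x * ψ.derivative.eval x)
        + (dgAvg Nx X Ef (j + 1) - β * dgJump Nx X Φf (j + 1)) *
            ψ.eval (X (j + 1))
        - (dgAvg Nx X Ef j - β * dgJump Nx X Φf j) * ψ.eval (X j)
      = cellInt X j fun x => (vth * (C0f j).eval x - ρ0) * ψ.eval x)

/-- `∫_0^L u dx` for a piecewise polynomial `u`. -/
def dgTotInt (Nx : ℕ) (X : ℕ → ℝ) (u : ℕ → Polynomial ℝ) : ℝ :=
  ∑ j ∈ Finset.range Nx, cellInt X j fun x => (u j).eval x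

/-- The discrete total energy
`ℰ_h = (1/2) ∫_0^L [v_th³(√2 C_2 + C_0) + E²] dx + (β/2) Σ_j [Φ]_{j−1/2}²`. -/
def dgEnergy (vth β : ℝ) (Nx : ℕ) (X : ℕ → ℝ) (Cf : ℕ → ℕ → Polynomial ℝ)
    (Ef Φf : ℕ → Polynomial ℝ) : ℝ :=
  (1 / 2) * ∑ j ∈ Finset.range Nx,
      (cellInt X j fun x =>
        vth ^ 3 * (Real.sqrt 2 * (Cf 2 j).eval x + (Cf 0 j).eval x)
          + ((Ef j).eval x) ^ 2)
    + (β / 2) * ∑ j ∈ Finset.range Nx, (dgJump Nx X Φf j) ^ 2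

end

open MeasureTheory Finset Polynomial intervalIntegral

noncomputable section
namespace DGAux
def nd : ℕ → ℝ := fun i => (i : ℝ)

lemma nd_inj (k : ℕ) : Set.InjOn nd (Finset.range (k+1)) :=
  fun _ _ _ _ h => Nat.cast_injective h

lemma degree_lt_card {k : ℕ} {p : Polynomial ℝ} (hp : p.natDegree ≤ k) :
    p.degree < (Finset.range (k+1)).card := by
  rw [Finset.card_range]
  exact lt_of_le_of_lt p.degree_le_natDegree (by exact_mod_cast Nat.lt_succ_of_le hp)

lemma eval_rep {k : ℕ} {p : Polynomial ℝ} (hp : p.natDegree ≤ k) (x : ℝ) :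
    p.eval x = ∑ m ∈ Finset.range (k+1),
      p.eval (nd m) * (Lagrange.basis (Finset.range (k+1)) nd m).eval x := by
  conv_lhs => rw [Lagrange.eq_interpolate (nd_inj k) (degree_lt_card hp)]
  rw [Lagrange.interpolate_apply, eval_finset_sum]
  simp [eval_mul]

def pdot (k : ℕ) (u : ℝ → Polynomial ℝ) (t : ℝ) : Polynomial ℝ :=
  Lagrange.interpolate (Finset.range (k+1)) nd
    (fun m => deriv (fun s => (u s).eval (nd m)) t)

lemma pdot_natDegree_le (k : ℕ) (u : ℝ → Polynomial ℝ) (t : ℝ) :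
    (pdot k u t).natDegree ≤ k := by
  have h := Lagrange.degree_interpolate_lt
    (fun m => deriv (fun s => (u s).eval (nd m)) t) (nd_inj k)
  rw [Finset.card_range] at h
  rcases eq_or_ne (pdot k u t) 0 with h0 | h0
  · simp [h0]
  · have := (Polynomial.degree_eq_natDegree h0) ▸ h
    exact_mod_cast Nat.lt_succ_iff.mp (by exact_mod_cast this)

lemma pdot_eval_node (k : ℕ) (u : ℝ → Polynomial ℝ) (t : ℝ) {m : ℕ}
    (hm : m ∈ Finset.range (k+1)) :
    (pdot k u t).eval (nd m) = deriv (fun s => (u s).eval (nd m)) t :=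
  Lagrange.eval_interpolate_at_node _ (nd_inj k) hm

lemma hasDerivAt_eval {k : ℕ} {u : ℝ → Polynomial ℝ}
    (hdeg : ∀ s, (u s).natDegree ≤ k)
    (hdiff : ∀ x, Differentiable ℝ fun s => (u s).eval x) (t x : ℝ) :
    HasDerivAt (fun s => (u s).eval x) ((pdot k u t).eval x) t := by
  have hfun : (fun s => (u s).eval x) = fun s => ∑ m ∈ Finset.range (k+1),
      (u s).eval (nd m) * (Lagrange.basis (Finset.range (k+1)) nd m).eval x :=
    funext fun s => eval_rep (hdeg s) x
  have hval : (pdot k u t).eval x = ∑ m ∈ Finset.range (k+1),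
      deriv (fun s => (u s).eval (nd m)) t
        * (Lagrange.basis (Finset.range (k+1)) nd m).eval x := by
    rw [pdot, Lagrange.interpolate_apply, eval_finset_sum]
    simp [eval_mul]
  rw [hfun, hval]
  exact HasDerivAt.fun_sum fun m _ => ((hdiff (nd m)) t).hasDerivAt.mul_const _

lemma pdot_const (k : ℕ) (q : Polynomial ℝ) (t : ℝ) :
    pdot k (fun _ => q) t = 0 := by
  rw [pdot]
  have : (fun m => deriv (fun _ : ℝ => q.eval (nd m)) t) = (0 : ℕ → ℝ) := by
    funext m; simp
  rw [this, map_zero]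

noncomputable def kmat (k : ℕ) (a b : ℝ) (m n : ℕ) : ℝ :=
  ∫ x in a..b, (Lagrange.basis (Finset.range (k+1)) nd m).eval x
    * (Lagrange.basis (Finset.range (k+1)) nd n).eval x

lemma expand (k : ℕ) (a b : ℝ) (P Q : Polynomial ℝ)
    (hP : P.natDegree ≤ k) (hQ : Q.natDegree ≤ k) :
    (∫ x in a..b, P.eval x * Q.eval x)
      = ∑ m ∈ Finset.range (k+1), ∑ n ∈ Finset.range (k+1),
          P.eval (nd m) * Q.eval (nd n) * kmat k a b m n := by
  have h1 : ∀ x : ℝ, P.eval x * Q.eval x = ∑ m ∈ Finset.range (k+1), ∑ n ∈ Finset.range (k+1),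
      P.eval (nd m) * Q.eval (nd n) *
        ((Lagrange.basis (Finset.range (k+1)) nd m).eval x
          * (Lagrange.basis (Finset.range (k+1)) nd n).eval x) := by
    intro x
    rw [eval_rep hP x, eval_rep hQ x, Finset.sum_mul_sum]
    exact Finset.sum_congr rfl fun m _ => Finset.sum_congr rfl fun n _ => by ring
  calc (∫ x in a..b, P.eval x * Q.eval x)
      = ∫ x in a..b, ∑ m ∈ Finset.range (k+1), ∑ n ∈ Finset.range (k+1),
          P.eval (nd m) * Q.eval (nd n) *
            ((Lagrange.basis (Finset.range (k+1)) nd m).eval x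
              * (Lagrange.basis (Finset.range (k+1)) nd n).eval x) := by
        simp only [h1]
    _ = ∑ m ∈ Finset.range (k+1), ∫ x in a..b, ∑ n ∈ Finset.range (k+1),
          P.eval (nd m) * Q.eval (nd n) *
            ((Lagrange.basis (Finset.range (k+1)) nd m).eval x
              * (Lagrange.basis (Finset.range (k+1)) nd n).eval x) := by
        apply intervalIntegral.integral_finset_sum
        intro m _
        apply Continuous.intervalIntegrable
        exact continuous_finset_sum _ fun n _ => continuous_const.mul
          ((Lagrange.basis (Finset.range (k+1)) nd m).continuous.mul
            (Lagrange.basis (Finset.range (k+1)) nd n).continuous)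
    _ = ∑ m ∈ Finset.range (k+1), ∑ n ∈ Finset.range (k+1),
          P.eval (nd m) * Q.eval (nd n) * kmat k a b m n := by
        refine Finset.sum_congr rfl fun m _ => ?_
        rw [intervalIntegral.integral_finset_sum (fun n _ => Continuous.intervalIntegrable
          (continuous_const.fun_mul
            ((Lagrange.basis (Finset.range (k+1)) nd m).continuous.fun_mul
              (Lagrange.basis (Finset.range (k+1)) nd n).continuous)) _ _)]
        exact Finset.sum_congr rfl fun n _ => integral_const_mul _ _

/-- Derivative of a bilinear cell integral. -/
lemma hasDerivAt_int_mul {k : ℕ} {u w : ℝ → Polynomial ℝ}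
    (hu : ∀ s, (u s).natDegree ≤ k) (hud : ∀ x, Differentiable ℝ fun s => (u s).eval x)
    (hw : ∀ s, (w s).natDegree ≤ k) (hwd : ∀ x, Differentiable ℝ fun s => (w s).eval x)
    (t a b : ℝ) :
    HasDerivAt (fun s => ∫ x in a..b, (u s).eval x * (w s).eval x)
      ((∫ x in a..b, (pdot k u t).eval x * (w t).eval x)
        + ∫ x in a..b, (u t).eval x * (pdot k w t).eval x) t := by
  have hfun : (fun s => ∫ x in a..b, (u s).eval x * (w s).eval x)
      = fun s => ∑ m ∈ Finset.range (k+1), ∑ n ∈ Finset.range (k+1),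
          (u s).eval (nd m) * (w s).eval (nd n) * kmat k a b m n :=
    funext fun s => expand k a b _ _ (hu s) (hw s)
  have hval : (∫ x in a..b, (pdot k u t).eval x * (w t).eval x)
        + (∫ x in a..b, (u t).eval x * (pdot k w t).eval x)
      = ∑ m ∈ Finset.range (k+1), ∑ n ∈ Finset.range (k+1),
          (deriv (fun s => (u s).eval (nd m)) t * (w t).eval (nd n)
            + (u t).eval (nd m) * deriv (fun s => (w s).eval (nd n)) t) * kmat k a b m n := by
    rw [expand k a b _ _ (pdot_natDegree_le k u t) (hw t),
        expand k a b _ _ (hu t) (pdot_natDegree_le k w t), ← Finset.sum_add_distrib]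
    refine Finset.sum_congr rfl fun m hm => ?_
    rw [← Finset.sum_add_distrib]
    refine Finset.sum_congr rfl fun n hn => ?_
    rw [pdot_eval_node k u t hm, pdot_eval_node k w t hn]
    ring
  rw [hfun, hval]
  exact HasDerivAt.fun_sum fun m _ => HasDerivAt.fun_sum fun n _ =>
    (((hud (nd m)) t).hasDerivAt.fun_mul ((hwd (nd n)) t).hasDerivAt).mul_const _

end DGAux
end
noncomputable section DGHelpers
open Polynomial DGAux intervalIntegral

lemma cellInt_congr (X : ℕ → ℝ) (j : ℕ) {f g : ℝ → ℝ} (h : ∀ x, f x = g x) :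
    cellInt X j f = cellInt X j g := by
  rw [show f = g from funext h]

lemma cellInt_add (X : ℕ → ℝ) (j : ℕ) {f g : ℝ → ℝ} (hf : Continuous f) (hg : Continuous g) :
    cellInt X j (fun x => f x + g x) = cellInt X j f + cellInt X j g :=
  intervalIntegral.integral_add (hf.intervalIntegrable _ _) (hg.intervalIntegrable _ _)

lemma cellInt_sub (X : ℕ → ℝ) (j : ℕ) {f g : ℝ → ℝ} (hf : Continuous f) (hg : Continuous g) :
    cellInt X j (fun x => f x - g x) = cellInt X j f - cellInt X j g :=
  intervalIntegral.integral_sub (hf.intervalIntegrable _ _) (hg.intervalIntegrable _ _)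

lemma cellInt_const_mul (X : ℕ → ℝ) (j : ℕ) (c : ℝ) (f : ℝ → ℝ) :
    cellInt X j (fun x => c * f x) = c * cellInt X j f :=
  intervalIntegral.integral_const_mul c f

lemma cellInt_mul_comm (X : ℕ → ℝ) (j : ℕ) (f g : ℝ → ℝ) :
    cellInt X j (fun x => f x * g x) = cellInt X j (fun x => g x * f x) :=
  cellInt_congr X j fun x => mul_comm _ _

lemma cellInt_ibp (X : ℕ → ℝ) (j : ℕ) (p q : Polynomial ℝ) :
    cellInt X j (fun x => p.eval x * (Polynomial.derivative q).eval x)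
      + cellInt X j (fun x => (Polynomial.derivative p).eval x * q.eval x)
      = p.eval (X (j+1)) * q.eval (X (j+1)) - p.eval (X j) * q.eval (X j) := by
  unfold cellInt
  rw [← intervalIntegral.integral_add
      ((p.continuous.fun_mul (Polynomial.derivative q).continuous).intervalIntegrable _ _)
      (((Polynomial.derivative p).continuous.fun_mul q.continuous).intervalIntegrable _ _)]
  have h : ∀ x ∈ Set.uIcc (X j) (X (j+1)),
      HasDerivAt (fun y => p.eval y * q.eval y)
        (p.eval x * (Polynomial.derivative q).eval x
          + (Polynomial.derivative p).eval x * q.eval x) x := by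
    intro x _
    have := (p.hasDerivAt x).fun_mul (q.hasDerivAt x)
    rw [add_comm]
    exact this
  exact intervalIntegral.integral_eq_sub_of_hasDerivAt h
    (Continuous.intervalIntegrable
      ((p.continuous.mul (Polynomial.derivative q).continuous).add
        ((Polynomial.derivative p).continuous.mul q.continuous)) _ _)

lemma dgMinus_per {Nx : ℕ} (hNx : 0 < Nx) (X : ℕ → ℝ) (u : ℕ → Polynomial ℝ) :
    dgMinus Nx X u Nx = dgMinus Nx X u 0 := by
  unfold dgMinus
  rw [if_neg (by omega), if_pos rfl]

lemma dgPlus_per {Nx : ℕ} (hNx : 0 < Nx) (X : ℕ → ℝ) (u : ℕ → Polynomial ℝ) :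
    dgPlus Nx X u Nx = dgPlus Nx X u 0 := by
  unfold dgPlus
  rw [if_pos rfl, if_neg (by omega)]

lemma dgJump_per {Nx : ℕ} (hNx : 0 < Nx) (X : ℕ → ℝ) (u : ℕ → Polynomial ℝ) :
    dgJump Nx X u Nx = dgJump Nx X u 0 := by
  unfold dgJump; rw [dgMinus_per hNx, dgPlus_per hNx]

lemma dgAvg_per {Nx : ℕ} (hNx : 0 < Nx) (X : ℕ → ℝ) (u : ℕ → Polynomial ℝ) :
    dgAvg Nx X u Nx = dgAvg Nx X u 0 := by
  unfold dgAvg; rw [dgMinus_per hNx, dgPlus_per hNx]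

lemma dgGhat_per {Nx : ℕ} (hNx : 0 < Nx) (vth : ℝ) (NH : ℕ) (X : ℕ → ℝ)
    (Cf : ℕ → ℕ → Polynomial ℝ) (n : ℕ) :
    dgGhat vth NH Nx X Cf n Nx = dgGhat vth NH Nx X Cf n 0 := by
  unfold dgGhat
  rw [dgMinus_per hNx, dgPlus_per hNx, dgMinus_per hNx, dgPlus_per hNx]

lemma dgC1hat_per {Nx : ℕ} (hNx : 0 < Nx) (vth : ℝ) (NH : ℕ) (X : ℕ → ℝ)
    (Cf : ℕ → ℕ → Polynomial ℝ) :
    dgC1hat vth NH Nx X Cf Nx = dgC1hat vth NH Nx X Cf 0 := by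
  unfold dgC1hat; rw [dgGhat_per hNx]

lemma sum_shift {Nx : ℕ} (f : ℕ → ℝ) (h : f Nx = f 0) :
    ∑ j ∈ Finset.range Nx, f (j+1) = ∑ j ∈ Finset.range Nx, f j := by
  have h1 := Finset.sum_range_succ' f Nx
  have h2 := Finset.sum_range_succ f Nx
  linarith

/-- time derivative of a two-parameter family -/
def edot (k : ℕ) (u : ℝ → ℕ → Polynomial ℝ) (t : ℝ) : ℕ → Polynomial ℝ :=
  fun j => DGAux.pdot k (fun s => u s j) t

lemma edot_natDegree_le (k : ℕ) (u : ℝ → ℕ → Polynomial ℝ) (t : ℝ) (j : ℕ) :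
    (edot k u t j).natDegree ≤ k := pdot_natDegree_le k _ t

lemma hasDerivAt_eval₂ {k : ℕ} {u : ℝ → ℕ → Polynomial ℝ}
    (hdeg : ∀ s j, (u s j).natDegree ≤ k)
    (hdiff : ∀ j x, Differentiable ℝ fun s => (u s j).eval x) (t : ℝ) (j : ℕ) (x : ℝ) :
    HasDerivAt (fun s => (u s j).eval x) ((edot k u t j).eval x) t :=
  hasDerivAt_eval (fun s => hdeg s j) (hdiff j) t x

lemma hasDerivAt_dgJump {Nx : ℕ} {X : ℕ → ℝ} {k : ℕ} {u : ℝ → ℕ → Polynomial ℝ}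
    (hdeg : ∀ s j, (u s j).natDegree ≤ k)
    (hdiff : ∀ j x, Differentiable ℝ fun s => (u s j).eval x) (t : ℝ) (i : ℕ) :
    HasDerivAt (fun s => dgJump Nx X (u s) i) (dgJump Nx X (edot k u t) i) t := by
  unfold dgJump dgPlus dgMinus
  split_ifs <;>
    exact (hasDerivAt_eval₂ hdeg hdiff t _ _).sub (hasDerivAt_eval₂ hdeg hdiff t _ _)

lemma hasDerivAt_dgAvg {Nx : ℕ} {X : ℕ → ℝ} {k : ℕ} {u : ℝ → ℕ → Polynomial ℝ}
    (hdeg : ∀ s j, (u s j).natDegree ≤ k)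
    (hdiff : ∀ j x, Differentiable ℝ fun s => (u s j).eval x) (t : ℝ) (i : ℕ) :
    HasDerivAt (fun s => dgAvg Nx X (u s) i) (dgAvg Nx X (edot k u t) i) t := by
  unfold dgAvg dgPlus dgMinus
  split_ifs <;>
    exact ((hasDerivAt_eval₂ hdeg hdiff t _ _).add (hasDerivAt_eval₂ hdeg hdiff t _ _)).div_const 2

lemma hasDerivAt_cellInt_mul₂ {X : ℕ → ℝ} {k : ℕ} {u w : ℝ → ℕ → Polynomial ℝ}
    (hdegu : ∀ s j, (u s j).natDegree ≤ k)
    (hdiffu : ∀ j x, Differentiable ℝ fun s => (u s j).eval x)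
    (hdegw : ∀ s j, (w s j).natDegree ≤ k)
    (hdiffw : ∀ j x, Differentiable ℝ fun s => (w s j).eval x) (t : ℝ) (j : ℕ) :
    HasDerivAt (fun s => cellInt X j fun x => (u s j).eval x * (w s j).eval x)
      ((cellInt X j fun x => (edot k u t j).eval x * (w t j).eval x)
        + cellInt X j fun x => (u t j).eval x * (edot k w t j).eval x) t := by
  unfold cellInt edot
  exact hasDerivAt_int_mul (fun s => hdegu s j) (hdiffu j) (fun s => hdegw s j) (hdiffw j) t _ _

lemma hasDerivAt_cellInt_mul_const {X : ℕ → ℝ} {k : ℕ} {u : ℝ → ℕ → Polynomial ℝ}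
    (hdegu : ∀ s j, (u s j).natDegree ≤ k)
    (hdiffu : ∀ j x, Differentiable ℝ fun s => (u s j).eval x)
    (q : Polynomial ℝ) (hq : q.natDegree ≤ k) (t : ℝ) (j : ℕ) :
    HasDerivAt (fun s => cellInt X j fun x => (u s j).eval x * q.eval x)
      (cellInt X j fun x => (edot k u t j).eval x * q.eval x) t := by
  have h := hasDerivAt_cellInt_mul₂ (X := X) (w := fun _ _ => q) hdegu hdiffu
    (fun _ _ => hq) (fun _ _ => differentiable_const _) t j
  simpa [edot, pdot_const, cellInt] using h

lemma cellId (vth I1 I2 I3 I4 I5 I6 d avgJ1 avgJ edm edp AJ1 AJ g1 g0 c1m c1p phim phip : ℝ)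
    (h1 : I1 - avgJ1 * edm + avgJ * edp = I2)
    (h2 : I1 + I3 = phim * edm - phip * edp)
    (h3 : -I3 + AJ1 * phim - AJ * phip = vth * d)
    (h4 : d = vth * I4 - g1 * phim + g0 * phip)
    (h5 : I5 - avgJ1 * c1m + avgJ * c1p = I6)
    (h6 : I5 + I4 = phim * c1m - phip * c1p) :
    I2 + vth^2 * I6
      = (phim * edm - AJ1 * phim - avgJ1 * edm - vth * (g1 * phim)
          + vth^2 * (phim * c1m - avgJ1 * c1m))
        - (phip * edp - AJ * phip - avgJ * edp - vth * (g0 * phip)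
          + vth^2 * (phip * c1p - avgJ * c1p)) := by
  linear_combination -h1 + h2 + h3 + vth * h4 - vth^2 * h5 + vth^2 * h6

lemma interfaceId (vth β φp φm edp edm φdp φdm c1p c1m g : ℝ) (hv : vth ≠ 0) :
    ((φm * edm - ((edp + edm)/2 - β * (φdp - φdm)) * φm - ((φp + φm)/2) * edm - vth * (g * φm)
        + vth^2 * (φm * c1m - ((φp + φm)/2) * c1m))
      - (φp * edp - ((edp + edm)/2 - β * (φdp - φdm)) * φp - ((φp + φm)/2) * edp - vth * (g * φp)
        + vth^2 * (φp * c1p - ((φp + φm)/2) * c1p)))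
    = -(β * ((φdp - φdm) * (φp - φm)))
      - vth^2 * (((c1p + c1m)/2 - g / vth) * (φp - φm)) := by
  field_simp
  ring

lemma dgMinus_succ {Nx : ℕ} (X : ℕ → ℝ) (u : ℕ → Polynomial ℝ) (j : ℕ) :
    dgMinus Nx X u (j+1) = (u j).eval (X (j+1)) := by
  unfold dgMinus; rw [if_neg (Nat.succ_ne_zero j)]; simp

lemma dgPlus_lt {Nx : ℕ} (X : ℕ → ℝ) (u : ℕ → Polynomial ℝ) {j : ℕ} (hj : j < Nx) :
    dgPlus Nx X u j = (u j).eval (X j) := by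
  unfold dgPlus; rw [if_neg (by omega)]

end DGHelpers
/-- Conservation of the discrete total energy for the modified semi-discrete
discontinuous Galerkin scheme: `ℰ_h(t)` is constant in `t`. -/
theorem dg_semidiscrete_energy_conservation
    (L vth ρ0 β : ℝ) (k Nx NH : ℕ)
    (hL : 0 < L) (hvth : 0 < vth) (hβ : 0 < β) (hNx : 1 ≤ Nx) (hNH : 3 ≤ NH)
    -- the partition `0 = x_{1/2} < … < x_{Nx+1/2} = L`
    (X : ℕ → ℝ) (hX0 : X 0 = 0) (hXL : X Nx = L)
    (hXmono : ∀ j < Nx, X j < X (j + 1))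
    -- the numerical solution, cell by cell
    (C : ℕ → ℝ → ℕ → Polynomial ℝ) (E Φ : ℝ → ℕ → Polynomial ℝ)
    -- membership in `V_h^k`
    (hdegC : ∀ n t j, (C n t j).natDegree ≤ k)
    (hdegE : ∀ t j, (E t j).natDegree ≤ k)
    (hdegΦ : ∀ t j, (Φ t j).natDegree ≤ k)
    -- truncation convention `C_{N_H} = 0` (and beyond)
    (hCtop : ∀ n, NH ≤ n → ∀ t j, C n t j = 0)
    -- C¹ regularity in time
    (hC1 : ∀ n j (φ : Polynomial ℝ),
      Differentiable ℝ fun t => cellInt X j fun x => (C n t j).eval x * φ.eval x)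
    -- the modified semi-discrete DG scheme
    (hScheme : ∀ t : ℝ, ∀ n < NH, ∀ j < Nx, ∀ φ : Polynomial ℝ, φ.natDegree ≤ k →
      deriv (fun s => cellInt X j fun x => (C n s j).eval x * φ.eval x) t
        + dgA vth NH Nx X (fun m i => C m t i) n j φ
        + dgB vth β NH Nx X (fun m i => C m t i) (E t) (Φ t) n j φ = 0)
    -- C¹ regularity in time of the electric field and potential
    (hE1 : ∀ j x, Differentiable ℝ fun t => (E t j).eval x)
    (hΦ1 : ∀ j x, Differentiable ℝ fun t => (Φ t j).eval x)
    -- the DG Poisson solver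
    (hPoisson : ∀ t : ℝ, dgPoisson vth ρ0 β k Nx X (C 0 t) (E t) (Φ t)) :
    ∀ t : ℝ, dgEnergy vth β Nx X (fun m i => C m t i) (E t) (Φ t)
      = dgEnergy vth β Nx X (fun m i => C m 0 i) (E 0) (Φ 0) := by
  have hNx0 : 0 < Nx := hNx
  have hv : vth ≠ 0 := ne_of_gt hvth
  suffices H : ∀ t : ℝ, HasDerivAt
      (fun s => dgEnergy vth β Nx X (fun m i => C m s i) (E s) (Φ s)) 0 t by
    intro t
    exact is_const_of_deriv_eq_zero (fun s => (H s).differentiableAt)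
      (fun s => (H s).deriv) t 0
  intro t
  have hdegEs : ∀ s j, (E s j).natDegree ≤ k := fun s j => hdegE s j
  have hdegΦs : ∀ s j, (Φ s j).natDegree ≤ k := fun s j => hdegΦ s j
  -- decomposition of the energy
  have hEfun : (fun s => dgEnergy vth β Nx X (fun m i => C m s i) (E s) (Φ s))
      = fun s =>
        (vth ^ 3 * Real.sqrt 2 / 2) *
            (∑ j ∈ Finset.range Nx,
              cellInt X j fun x => (C 2 s j).eval x * (1 : Polynomial ℝ).eval x)
          + ((vth ^ 3 / 2) *
              (∑ j ∈ Finset.range Nx,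
                cellInt X j fun x => (C 0 s j).eval x * (1 : Polynomial ℝ).eval x)
          + ((1/2) *
              (∑ j ∈ Finset.range Nx,
                cellInt X j fun x => (E s j).eval x * (E s j).eval x)
          + (β/2) * ∑ j ∈ Finset.range Nx, (dgJump Nx X (Φ s) j) ^ 2)) := by
    funext s
    simp only [dgEnergy]
    have hsplit : ∀ j, (cellInt X j fun x =>
        vth ^ 3 * (Real.sqrt 2 * (C 2 s j).eval x + (C 0 s j).eval x) + ((E s j).eval x) ^ 2)
      = (vth ^ 3 * Real.sqrt 2) *
            (cellInt X j fun x => (C 2 s j).eval x * (1 : Polynomial ℝ).eval x)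
        + ((vth ^ 3) *
            (cellInt X j fun x => (C 0 s j).eval x * (1 : Polynomial ℝ).eval x)
        + cellInt X j fun x => (E s j).eval x * (E s j).eval x) := by
      intro j
      calc (cellInt X j fun x =>
          vth ^ 3 * (Real.sqrt 2 * (C 2 s j).eval x + (C 0 s j).eval x) + ((E s j).eval x) ^ 2)
          = cellInt X j (fun x =>
              (vth ^ 3 * Real.sqrt 2) * ((C 2 s j).eval x * (1 : Polynomial ℝ).eval x)
                + ((vth ^ 3) * ((C 0 s j).eval x * (1 : Polynomial ℝ).eval x)
                  + (E s j).eval x * (E s j).eval x)) :=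
            cellInt_congr X j fun x => by simp only [Polynomial.eval_one]; ring
        _ = _ := by
            rw [cellInt_add X j
                (continuous_const.fun_mul ((C 2 s j).continuous.fun_mul (1 : Polynomial ℝ).continuous))
                ((continuous_const.fun_mul ((C 0 s j).continuous.fun_mul (1 : Polynomial ℝ).continuous)).fun_add
                  ((E s j).continuous.fun_mul (E s j).continuous)),
              cellInt_add X j
                (continuous_const.fun_mul ((C 0 s j).continuous.fun_mul (1 : Polynomial ℝ).continuous))
                ((E s j).continuous.fun_mul (E s j).continuous),
              cellInt_const_mul, cellInt_const_mul]
    rw [Finset.sum_congr rfl fun j _ => hsplit j, Finset.sum_add_distrib,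
        Finset.sum_add_distrib, ← Finset.mul_sum, ← Finset.mul_sum]
    ring
  -- derivatives of the four pieces
  have hA2 : HasDerivAt (fun s => ∑ j ∈ Finset.range Nx,
        cellInt X j fun x => (C 2 s j).eval x * (1 : Polynomial ℝ).eval x)
      (∑ j ∈ Finset.range Nx,
        deriv (fun s => cellInt X j fun x => (C 2 s j).eval x * (1 : Polynomial ℝ).eval x) t) t :=
    HasDerivAt.fun_sum fun j _ => ((hC1 2 j 1) t).hasDerivAt
  have hA0 : HasDerivAt (fun s => ∑ j ∈ Finset.range Nx,
        cellInt X j fun x => (C 0 s j).eval x * (1 : Polynomial ℝ).eval x)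
      (∑ j ∈ Finset.range Nx,
        deriv (fun s => cellInt X j fun x => (C 0 s j).eval x * (1 : Polynomial ℝ).eval x) t) t :=
    HasDerivAt.fun_sum fun j _ => ((hC1 0 j 1) t).hasDerivAt
  have hQ : HasDerivAt (fun s => ∑ j ∈ Finset.range Nx,
        cellInt X j fun x => (E s j).eval x * (E s j).eval x)
      (∑ j ∈ Finset.range Nx,
        ((cellInt X j fun x => (edot k E t j).eval x * (E t j).eval x)
          + cellInt X j fun x => (E t j).eval x * (edot k E t j).eval x)) t :=
    HasDerivAt.fun_sum fun j _ => hasDerivAt_cellInt_mul₂ hdegEs hE1 hdegEs hE1 t j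
  have hJ : HasDerivAt (fun s => ∑ j ∈ Finset.range Nx, (dgJump Nx X (Φ s) j) ^ 2)
      (∑ j ∈ Finset.range Nx,
        (dgJump Nx X (edot k Φ t) j * dgJump Nx X (Φ t) j
          + dgJump Nx X (Φ t) j * dgJump Nx X (edot k Φ t) j)) t := by
    refine HasDerivAt.fun_sum fun j _ => ?_
    have h := hasDerivAt_dgJump (Nx := Nx) (X := X) hdegΦs hΦ1 t j
    simpa [pow_two] using h.fun_mul h
  have hDer : HasDerivAt
      (fun s => dgEnergy vth β Nx X (fun m i => C m s i) (E s) (Φ s))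
      ((vth ^ 3 * Real.sqrt 2 / 2) *
          (∑ j ∈ Finset.range Nx,
            deriv (fun s => cellInt X j fun x => (C 2 s j).eval x * (1 : Polynomial ℝ).eval x) t)
        + ((vth ^ 3 / 2) *
            (∑ j ∈ Finset.range Nx,
              deriv (fun s => cellInt X j fun x => (C 0 s j).eval x * (1 : Polynomial ℝ).eval x) t)
        + ((1/2) *
            (∑ j ∈ Finset.range Nx,
              ((cellInt X j fun x => (edot k E t j).eval x * (E t j).eval x)
                + cellInt X j fun x => (E t j).eval x * (edot k E t j).eval x))
        + (β/2) * ∑ j ∈ Finset.range Nx,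
            (dgJump Nx X (edot k Φ t) j * dgJump Nx X (Φ t) j
              + dgJump Nx X (Φ t) j * dgJump Nx X (edot k Φ t) j)))) t := by
    rw [hEfun]
    exact (hA2.const_mul _).add ((hA0.const_mul _).add ((hQ.const_mul _).add (hJ.const_mul _)))

  -- the value of the derivative is zero
  have hd0sum : (∑ j ∈ Finset.range Nx,
      deriv (fun s => cellInt X j fun x => (C 0 s j).eval x * (1 : Polynomial ℝ).eval x) t) = 0 := by
    have hper : ∀ j ∈ Finset.range Nx,
        deriv (fun s => cellInt X j fun x => (C 0 s j).eval x * (1 : Polynomial ℝ).eval x) t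
          = -(dgGhat vth NH Nx X (fun m i => C m t i) 0 (j+1)
              - dgGhat vth NH Nx X (fun m i => C m t i) 0 j) := by
      intro j hj
      have hs := hScheme t 0 (by omega) j (Finset.mem_range.mp hj) 1 (by simp)
      have hA : dgA vth NH Nx X (fun m i => C m t i) 0 j 1
          = dgGhat vth NH Nx X (fun m i => C m t i) 0 (j+1)
            - dgGhat vth NH Nx X (fun m i => C m t i) 0 j := by
        simp [dgA, cellInt]
      have hB : dgB vth β NH Nx X (fun m i => C m t i) (E t) (Φ t) 0 j 1 = 0 := by
        simp [dgB, dgR]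
      rw [hA, hB] at hs
      linarith
    rw [Finset.sum_congr rfl hper]
    have htel : (∑ j ∈ Finset.range Nx,
        (dgGhat vth NH Nx X (fun m i => C m t i) 0 (j+1)
          - dgGhat vth NH Nx X (fun m i => C m t i) 0 j))
        = dgGhat vth NH Nx X (fun m i => C m t i) 0 Nx
          - dgGhat vth NH Nx X (fun m i => C m t i) 0 0 :=
      Finset.sum_range_sub (fun i => dgGhat vth NH Nx X (fun m i => C m t i) 0 i) Nx
    rw [Finset.sum_neg_distrib, htel, dgGhat_per hNx0]
    ring
  have hd2 : ∀ j ∈ Finset.range Nx,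
      deriv (fun s => cellInt X j fun x => (C 2 s j).eval x * (1 : Polynomial ℝ).eval x) t
        = -(dgGhat vth NH Nx X (fun m i => C m t i) 2 (j+1)
            - dgGhat vth NH Nx X (fun m i => C m t i) 2 j)
          + (Real.sqrt 2 / vth) * (cellInt X j fun x => (E t j).eval x * (C 1 t j).eval x)
          + (1 / (Real.sqrt 2 * vth)) *
              ((dgAvg Nx X (fun i => C 1 t i) j - dgC1hat vth NH Nx X (fun m i => C m t i) j)
                  * dgJump Nx X (Φ t) j
                + (dgAvg Nx X (fun i => C 1 t i) (j+1)
                    - dgC1hat vth NH Nx X (fun m i => C m t i) (j+1))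
                  * dgJump Nx X (Φ t) (j+1)) := by
    intro j hj
    have hs := hScheme t 2 (by omega) j (Finset.mem_range.mp hj) 1 (by simp)
    have hA : dgA vth NH Nx X (fun m i => C m t i) 2 j 1
        = dgGhat vth NH Nx X (fun m i => C m t i) 2 (j+1)
          - dgGhat vth NH Nx X (fun m i => C m t i) 2 j := by
      simp [dgA, cellInt]
    have hB : dgB vth β NH Nx X (fun m i => C m t i) (E t) (Φ t) 2 j 1
        = -(Real.sqrt 2 / vth) * (cellInt X j fun x => (E t j).eval x * (C 1 t j).eval x)
          - (1 / (Real.sqrt 2 * vth)) *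
              ((dgAvg Nx X (fun i => C 1 t i) j - dgC1hat vth NH Nx X (fun m i => C m t i) j)
                  * dgJump Nx X (Φ t) j
                + (dgAvg Nx X (fun i => C 1 t i) (j+1)
                    - dgC1hat vth NH Nx X (fun m i => C m t i) (j+1))
                  * dgJump Nx X (Φ t) (j+1)) := by
      simp [dgB, dgR, dgR2]
    rw [hA, hB] at hs
    linarith
  have hA2sum : (∑ j ∈ Finset.range Nx,
      deriv (fun s => cellInt X j fun x => (C 2 s j).eval x * (1 : Polynomial ℝ).eval x) t)
      = (Real.sqrt 2 / vth) *
          (∑ j ∈ Finset.range Nx, cellInt X j fun x => (E t j).eval x * (C 1 t j).eval x)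
        + (2 / (Real.sqrt 2 * vth)) *
          (∑ i ∈ Finset.range Nx,
            (dgAvg Nx X (fun i => C 1 t i) i - dgC1hat vth NH Nx X (fun m i => C m t i) i)
              * dgJump Nx X (Φ t) i) := by
    rw [Finset.sum_congr rfl hd2]
    have hshiftT : (∑ j ∈ Finset.range Nx,
        (dgAvg Nx X (fun i => C 1 t i) (j+1) - dgC1hat vth NH Nx X (fun m i => C m t i) (j+1))
          * dgJump Nx X (Φ t) (j+1))
        = ∑ i ∈ Finset.range Nx,
          (dgAvg Nx X (fun i => C 1 t i) i - dgC1hat vth NH Nx X (fun m i => C m t i) i)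
            * dgJump Nx X (Φ t) i :=
      sum_shift (fun i => (dgAvg Nx X (fun i => C 1 t i) i
          - dgC1hat vth NH Nx X (fun m i => C m t i) i) * dgJump Nx X (Φ t) i)
        (by simp only [dgAvg_per hNx0, dgC1hat_per hNx0, dgJump_per hNx0])
    have htel : (∑ j ∈ Finset.range Nx,
        (dgGhat vth NH Nx X (fun m i => C m t i) 2 (j+1)
          - dgGhat vth NH Nx X (fun m i => C m t i) 2 j))
        = dgGhat vth NH Nx X (fun m i => C m t i) 2 Nx
          - dgGhat vth NH Nx X (fun m i => C m t i) 2 0 :=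
      Finset.sum_range_sub (fun i => dgGhat vth NH Nx X (fun m i => C m t i) 2 i) Nx
    simp only [Finset.sum_add_distrib, ← Finset.mul_sum]
    rw [hshiftT, Finset.sum_neg_distrib, htel, dgGhat_per hNx0]
    ring
  -- interface quantities
  set U : ℕ → ℝ := fun i =>
    dgMinus Nx X (Φ t) i * dgMinus Nx X (edot k E t) i
      - (dgAvg Nx X (edot k E t) i - β * dgJump Nx X (edot k Φ t) i) * dgMinus Nx X (Φ t) i
      - dgAvg Nx X (Φ t) i * dgMinus Nx X (edot k E t) i
      - vth * (dgGhat vth NH Nx X (fun m i => C m t i) 0 i * dgMinus Nx X (Φ t) i)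
      + vth ^ 2 * (dgMinus Nx X (Φ t) i * dgMinus Nx X (fun i => C 1 t i) i
          - dgAvg Nx X (Φ t) i * dgMinus Nx X (fun i => C 1 t i) i) with hU
  set V : ℕ → ℝ := fun i =>
    dgPlus Nx X (Φ t) i * dgPlus Nx X (edot k E t) i
      - (dgAvg Nx X (edot k E t) i - β * dgJump Nx X (edot k Φ t) i) * dgPlus Nx X (Φ t) i
      - dgAvg Nx X (Φ t) i * dgPlus Nx X (edot k E t) i
      - vth * (dgGhat vth NH Nx X (fun m i => C m t i) 0 i * dgPlus Nx X (Φ t) i)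
      + vth ^ 2 * (dgPlus Nx X (Φ t) i * dgPlus Nx X (fun i => C 1 t i) i
          - dgAvg Nx X (Φ t) i * dgPlus Nx X (fun i => C 1 t i) i) with hV
  have hcell : ∀ j ∈ Finset.range Nx,
      (cellInt X j fun x => (E t j).eval x * (edot k E t j).eval x)
        + vth ^ 2 * (cellInt X j fun x => (E t j).eval x * (C 1 t j).eval x)
      = U (j+1) - V j := by
    intro j hj
    have hjlt := Finset.mem_range.mp hj
    have hq : (Polynomial.derivative (Φ t j)).natDegree ≤ k :=
      le_trans (Polynomial.natDegree_derivative_le _) (le_trans (Nat.sub_le _ _) (hdegΦ t j))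
    have hLder : HasDerivAt (fun s =>
        -(cellInt X j fun x => (E s j).eval x * (Polynomial.derivative (Φ t j)).eval x)
          + (dgAvg Nx X (E s) (j+1) - β * dgJump Nx X (Φ s) (j+1)) * (Φ t j).eval (X (j+1))
          - (dgAvg Nx X (E s) j - β * dgJump Nx X (Φ s) j) * (Φ t j).eval (X j))
        (-(cellInt X j fun x => (edot k E t j).eval x * (Polynomial.derivative (Φ t j)).eval x)
          + (dgAvg Nx X (edot k E t) (j+1) - β * dgJump Nx X (edot k Φ t) (j+1))
              * (Φ t j).eval (X (j+1))
          - (dgAvg Nx X (edot k E t) j - β * dgJump Nx X (edot k Φ t) j)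
              * (Φ t j).eval (X j)) t :=
      (((hasDerivAt_cellInt_mul_const hdegEs hE1 _ hq t j).neg).add
          (((hasDerivAt_dgAvg hdegEs hE1 t (j+1)).sub
            ((hasDerivAt_dgJump hdegΦs hΦ1 t (j+1)).const_mul β)).mul_const _)).sub
          (((hasDerivAt_dgAvg hdegEs hE1 t j).sub
            ((hasDerivAt_dgJump hdegΦs hΦ1 t j).const_mul β)).mul_const _)
    have hReq : (fun s =>
        -(cellInt X j fun x => (E s j).eval x * (Polynomial.derivative (Φ t j)).eval x)
          + (dgAvg Nx X (E s) (j+1) - β * dgJump Nx X (Φ s) (j+1)) * (Φ t j).eval (X (j+1))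
          - (dgAvg Nx X (E s) j - β * dgJump Nx X (Φ s) j) * (Φ t j).eval (X j))
        = fun s => vth * (cellInt X j fun x => (C 0 s j).eval x * (Φ t j).eval x)
            - cellInt X j (fun x => ρ0 * (Φ t j).eval x) := by
      funext s
      rw [(hPoisson s j hjlt (Φ t j) (hdegΦ t j)).2]
      calc cellInt X j (fun x => (vth * (C 0 s j).eval x - ρ0) * (Φ t j).eval x)
          = cellInt X j (fun x => vth * ((C 0 s j).eval x * (Φ t j).eval x)
              - ρ0 * (Φ t j).eval x) := cellInt_congr X j fun x => by ring
        _ = cellInt X j (fun x => vth * ((C 0 s j).eval x * (Φ t j).eval x))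
              - cellInt X j (fun x => ρ0 * (Φ t j).eval x) :=
            cellInt_sub X j
              (continuous_const.mul ((C 0 s j).continuous.mul (Φ t j).continuous))
              (continuous_const.mul (Φ t j).continuous)
        _ = vth * (cellInt X j fun x => (C 0 s j).eval x * (Φ t j).eval x)
              - cellInt X j (fun x => ρ0 * (Φ t j).eval x) := by rw [cellInt_const_mul]
    have hRder : HasDerivAt (fun s =>
        vth * (cellInt X j fun x => (C 0 s j).eval x * (Φ t j).eval x)
          - cellInt X j (fun x => ρ0 * (Φ t j).eval x))
        (vth * deriv (fun s => cellInt X j fun x => (C 0 s j).eval x * (Φ t j).eval x) t) t :=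
      (((hC1 0 j (Φ t j)) t).hasDerivAt.const_mul vth).sub_const _
    have h3 : -(cellInt X j fun x => (edot k E t j).eval x * (Polynomial.derivative (Φ t j)).eval x)
          + (dgAvg Nx X (edot k E t) (j+1) - β * dgJump Nx X (edot k Φ t) (j+1))
              * (Φ t j).eval (X (j+1))
          - (dgAvg Nx X (edot k E t) j - β * dgJump Nx X (edot k Φ t) j) * (Φ t j).eval (X j)
        = vth * deriv (fun s => cellInt X j fun x => (C 0 s j).eval x * (Φ t j).eval x) t :=
      hLder.unique (by rw [hReq]; exact hRder)
    have hs0 := hScheme t 0 (by omega) j hjlt (Φ t j) (hdegΦ t j)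
    have hB0 : dgB vth β NH Nx X (fun m i => C m t i) (E t) (Φ t) 0 j (Φ t j) = 0 := by
      simp [dgB, dgR]
    have hA0e : dgA vth NH Nx X (fun m i => C m t i) 0 j (Φ t j)
        = -(vth * (cellInt X j fun x => (C 1 t j).eval x * (Polynomial.derivative (Φ t j)).eval x))
          + dgGhat vth NH Nx X (fun m i => C m t i) 0 (j+1) * (Φ t j).eval (X (j+1))
          - dgGhat vth NH Nx X (fun m i => C m t i) 0 j * (Φ t j).eval (X j) := by
      have hgi : (cellInt X j fun x => (dgG vth (fun m i => C m t i) 0 j).eval x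
            * (Polynomial.derivative (Φ t j)).eval x)
          = vth * (cellInt X j fun x => (C 1 t j).eval x
              * (Polynomial.derivative (Φ t j)).eval x) := by
        rw [← cellInt_const_mul]
        refine cellInt_congr X j fun x => ?_
        have hg0 : (dgG vth (fun m i => C m t i) 0 j).eval x = vth * (C 1 t j).eval x := by
          simp [dgG]
        rw [hg0]; ring
      unfold dgA
      rw [hgi]
    have h4 : deriv (fun s => cellInt X j fun x => (C 0 s j).eval x * (Φ t j).eval x) t
        = vth * (cellInt X j fun x => (C 1 t j).eval x * (Polynomial.derivative (Φ t j)).eval x)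
          - dgGhat vth NH Nx X (fun m i => C m t i) 0 (j+1) * (Φ t j).eval (X (j+1))
          + dgGhat vth NH Nx X (fun m i => C m t i) 0 j * (Φ t j).eval (X j) := by
      rw [hA0e, hB0] at hs0
      linarith
    have h1 := (hPoisson t j hjlt (edot k E t j) (edot_natDegree_le k E t j)).1
    have h5 := (hPoisson t j hjlt (C 1 t j) (hdegC 1 t j)).1
    have h2 := cellInt_ibp X j (Φ t j) (edot k E t j)
    rw [cellInt_mul_comm X j (fun x => (Polynomial.derivative (Φ t j)).eval x)
        (fun x => (edot k E t j).eval x)] at h2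
    have h6 := cellInt_ibp X j (Φ t j) (C 1 t j)
    rw [cellInt_mul_comm X j (fun x => (Polynomial.derivative (Φ t j)).eval x)
        (fun x => (C 1 t j).eval x)] at h6
    have e1 : dgMinus Nx X (Φ t) (j+1) = (Φ t j).eval (X (j+1)) := dgMinus_succ X _ j
    have e2 : dgMinus Nx X (edot k E t) (j+1) = (edot k E t j).eval (X (j+1)) := dgMinus_succ X _ j
    have e3 : dgMinus Nx X (fun i => C 1 t i) (j+1) = (C 1 t j).eval (X (j+1)) := dgMinus_succ X _ j
    have e4 : dgPlus Nx X (Φ t) j = (Φ t j).eval (X j) := dgPlus_lt X _ hjlt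
    have e5 : dgPlus Nx X (edot k E t) j = (edot k E t j).eval (X j) := dgPlus_lt X _ hjlt
    have e6 : dgPlus Nx X (fun i => C 1 t i) j = (C 1 t j).eval (X j) := dgPlus_lt X _ hjlt
    simp only [hU, hV, e1, e2, e3, e4, e5, e6]
    exact cellId vth _ _ _ _ _ _ _ _ _ _ _ _ _ _ _ _ _ _ _ h1 h2 h3 h4 h5 h6
  have hUper : U Nx = U 0 := by
    simp only [hU, dgMinus_per hNx0, dgAvg_per hNx0, dgJump_per hNx0, dgGhat_per hNx0]
  have hUshift : (∑ j ∈ Finset.range Nx, U (j+1)) = ∑ j ∈ Finset.range Nx, U j :=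
    sum_shift U hUper
  have hInter : ∀ i ∈ Finset.range Nx, U i - V i
      = -(β * (dgJump Nx X (edot k Φ t) i * dgJump Nx X (Φ t) i))
        - vth ^ 2 * ((dgAvg Nx X (fun i => C 1 t i) i
            - dgC1hat vth NH Nx X (fun m i => C m t i) i) * dgJump Nx X (Φ t) i) := by
    intro i _
    simp only [hU, hV, dgJump, dgAvg, dgC1hat]
    exact interfaceId vth β _ _ _ _ _ _ _ _ _ hv
  have hkeysum :
      (∑ j ∈ Finset.range Nx, cellInt X j fun x => (E t j).eval x * (edot k E t j).eval x)
        + vth ^ 2 * (∑ j ∈ Finset.range Nx,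
            cellInt X j fun x => (E t j).eval x * (C 1 t j).eval x)
      = -(β * (∑ i ∈ Finset.range Nx, dgJump Nx X (edot k Φ t) i * dgJump Nx X (Φ t) i))
        - vth ^ 2 * (∑ i ∈ Finset.range Nx,
            (dgAvg Nx X (fun i => C 1 t i) i - dgC1hat vth NH Nx X (fun m i => C m t i) i)
              * dgJump Nx X (Φ t) i) := by
    calc (∑ j ∈ Finset.range Nx, cellInt X j fun x => (E t j).eval x * (edot k E t j).eval x)
          + vth ^ 2 * (∑ j ∈ Finset.range Nx,
              cellInt X j fun x => (E t j).eval x * (C 1 t j).eval x)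
        = ∑ j ∈ Finset.range Nx,
            ((cellInt X j fun x => (E t j).eval x * (edot k E t j).eval x)
              + vth ^ 2 * (cellInt X j fun x => (E t j).eval x * (C 1 t j).eval x)) := by
          rw [Finset.sum_add_distrib, ← Finset.mul_sum]
      _ = ∑ j ∈ Finset.range Nx, (U (j+1) - V j) := Finset.sum_congr rfl hcell
      _ = (∑ j ∈ Finset.range Nx, U (j+1)) - ∑ j ∈ Finset.range Nx, V j :=
          Finset.sum_sub_distrib _ _
      _ = (∑ j ∈ Finset.range Nx, U j) - ∑ j ∈ Finset.range Nx, V j := by rw [hUshift]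
      _ = ∑ j ∈ Finset.range Nx, (U j - V j) := (Finset.sum_sub_distrib _ _).symm
      _ = ∑ j ∈ Finset.range Nx,
            (-(β * (dgJump Nx X (edot k Φ t) j * dgJump Nx X (Φ t) j))
              - vth ^ 2 * ((dgAvg Nx X (fun i => C 1 t i) j
                  - dgC1hat vth NH Nx X (fun m i => C m t i) j) * dgJump Nx X (Φ t) j)) :=
          Finset.sum_congr rfl hInter
      _ = _ := by
          rw [Finset.sum_sub_distrib, Finset.sum_neg_distrib, ← Finset.mul_sum, ← Finset.mul_sum]
  have hQS : (∑ j ∈ Finset.range Nx,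
      ((cellInt X j fun x => (edot k E t j).eval x * (E t j).eval x)
        + cellInt X j fun x => (E t j).eval x * (edot k E t j).eval x))
      = 2 * ∑ j ∈ Finset.range Nx,
          cellInt X j fun x => (E t j).eval x * (edot k E t j).eval x := by
    calc (∑ j ∈ Finset.range Nx,
        ((cellInt X j fun x => (edot k E t j).eval x * (E t j).eval x)
          + cellInt X j fun x => (E t j).eval x * (edot k E t j).eval x))
        = ∑ j ∈ Finset.range Nx,
            (2 * (cellInt X j fun x => (E t j).eval x * (edot k E t j).eval x)) :=
          Finset.sum_congr rfl fun j _ => by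
            rw [cellInt_mul_comm X j (fun x => (edot k E t j).eval x)
                (fun x => (E t j).eval x)]
            ring
      _ = _ := by rw [← Finset.mul_sum]
  have hJS : (∑ j ∈ Finset.range Nx,
      (dgJump Nx X (edot k Φ t) j * dgJump Nx X (Φ t) j
        + dgJump Nx X (Φ t) j * dgJump Nx X (edot k Φ t) j))
      = 2 * ∑ j ∈ Finset.range Nx, dgJump Nx X (edot k Φ t) j * dgJump Nx X (Φ t) j := by
    calc (∑ j ∈ Finset.range Nx,
        (dgJump Nx X (edot k Φ t) j * dgJump Nx X (Φ t) j
          + dgJump Nx X (Φ t) j * dgJump Nx X (edot k Φ t) j))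
        = ∑ j ∈ Finset.range Nx,
            (2 * (dgJump Nx X (edot k Φ t) j * dgJump Nx X (Φ t) j)) :=
          Finset.sum_congr rfl fun j _ => by ring
      _ = _ := by rw [← Finset.mul_sum]
  have hs2 : Real.sqrt 2 * Real.sqrt 2 = 2 := Real.mul_self_sqrt (by norm_num)
  have hs2ne : Real.sqrt 2 ≠ 0 := by positivity
  have hc1 : vth ^ 3 * Real.sqrt 2 / 2 * (Real.sqrt 2 / vth) = vth ^ 2 := by
    rw [div_mul_div_comm, div_eq_iff (by positivity)]
    linear_combination vth ^ 3 * hs2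
  have hc2 : vth ^ 3 * Real.sqrt 2 / 2 * (2 / (Real.sqrt 2 * vth)) = vth ^ 2 := by
    field_simp
  have hZ : (vth ^ 3 * Real.sqrt 2 / 2) *
          (∑ j ∈ Finset.range Nx,
            deriv (fun s => cellInt X j fun x => (C 2 s j).eval x * (1 : Polynomial ℝ).eval x) t)
        + ((vth ^ 3 / 2) *
            (∑ j ∈ Finset.range Nx,
              deriv (fun s => cellInt X j fun x => (C 0 s j).eval x * (1 : Polynomial ℝ).eval x) t)
        + ((1/2) *
            (∑ j ∈ Finset.range Nx,
              ((cellInt X j fun x => (edot k E t j).eval x * (E t j).eval x)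
                + cellInt X j fun x => (E t j).eval x * (edot k E t j).eval x))
        + (β/2) * ∑ j ∈ Finset.range Nx,
            (dgJump Nx X (edot k Φ t) j * dgJump Nx X (Φ t) j
              + dgJump Nx X (Φ t) j * dgJump Nx X (edot k Φ t) j))) = 0 := by
    rw [hA2sum, hd0sum, hQS, hJS]
    linear_combination
      (∑ j ∈ Finset.range Nx, cellInt X j fun x => (E t j).eval x * (C 1 t j).eval x) * hc1
      + (∑ i ∈ Finset.range Nx,
          (dgAvg Nx X (fun i => C 1 t i) i - dgC1hat vth NH Nx X (fun m i => C m t i) i)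
            * dgJump Nx X (Φ t) i) * hc2
      + hkeysum
  exact hZ ▸ hDer
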